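/- arXiv:1806.10223 — 4 statements merged into one kernel-verified Lean document; each statement's English description precedes it below -/
import Mathlib

section
/- The partition counting function P(N,k,l) (number of partitions of N into at most l parts, each part at most k) satisfies the recurrence P(N,k,l) = P(N−k−l+1, k−1, l−1) + P(N,k−1,l) + P(N,k,l−1) − P(N,k−1,l−1) for all N,k,l ≥ 1. -/
open Finset

/-- The degree sequence (as a multiset) of a simple graph on `Fin n`. -/
noncomputable def degSeq {n : ℕ} (G : SimpleGraph (Fin n)) : Multiset ℕ :=
  Finset.univ.val.map fun v => Nat.card {w // G.Adj v w}

/-- Number of graphical degree sequences of length `n`, allowing zero terms. -/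
noncomputable def numD0 (n : ℕ) : ℕ :=
  Set.ncard {M : Multiset ℕ | ∃ G : SimpleGraph (Fin n), degSeq G = M}

/-- Number of zero-free graphical degree sequences of length `n`. -/
noncomputable def numD (n : ℕ) : ℕ :=
  Set.ncard {M : Multiset ℕ | (∀ x ∈ M, 0 < x) ∧ ∃ G : SimpleGraph (Fin n), degSeq G = M}

/-- Number of zero-free graphical degree sequences of length `n` with largest part `< n-1`. -/
noncomputable def numL (n : ℕ) : ℕ :=
  Set.ncard {M : Multiset ℕ | (∀ x ∈ M, 0 < x ∧ x < n - 1) ∧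
    ∃ G : SimpleGraph (Fin n), degSeq G = M}

/-- Number of graphical partitions of `N` with exactly `n` parts and largest part `< n-1`. -/
noncomputable def numL' (N n : ℕ) : ℕ :=
  Set.ncard {M : Multiset ℕ | M.sum = N ∧ Multiset.card M = n ∧ (∀ x ∈ M, 0 < x ∧ x < n - 1) ∧
    ∃ G : SimpleGraph (Fin n), degSeq G = M}

/-- The `i`-th largest part (1-indexed) of the partition given by the multiset `M`. -/
def prt (M : Multiset ℕ) (i : ℕ) : ℕ := (M.sort (· ≤ ·)).reverse.getD (i - 1) 0

/-- The `i`-th part (1-indexed) of the conjugate partition of `M`. -/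
def conjPrt (M : Multiset ℕ) (i : ℕ) : ℕ := Multiset.card (M.filter fun x => i ≤ x)

/-- The side length of the Durfee square of `M`. -/
def durfee (M : Multiset ℕ) : ℕ :=
  ((Finset.Icc 1 (Multiset.card M)).filter fun i => i ≤ prt M i).card

/-- The `i`-th corank `rᵢ(π) = πᵢ' - πᵢ` of the partition `M`. -/
def corank (M : Multiset ℕ) (i : ℕ) : ℤ := (conjPrt M i : ℤ) - (prt M i : ℤ)

/-- The Barnes–Savage corank condition with parameter `s`. -/
def corankCond (M : Multiset ℕ) (s : ℤ) : Prop :=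
  ∀ j : ℕ, 1 ≤ j → j ≤ durfee M → (j : ℤ) ≤ s + ∑ i ∈ Finset.Icc 1 j, corank M i

/-- Partitions of `N` into at most `l` parts with each part at most `k`. -/
def PboxSet (N : ℤ) (k l : ℕ) : Set (Multiset ℕ) :=
  {M | (M.sum : ℤ) = N ∧ Multiset.card M ≤ l ∧ ∀ x ∈ M, 0 < x ∧ x ≤ k}

/-- `P(N,k,l)`: number of partitions of `N` into at most `l` parts with each part at most `k`. -/
noncomputable def Pcount (N : ℤ) (k l : ℕ) : ℕ := Set.ncard (PboxSet N k l)

/-- The Barnes–Savage set `P(N,k,l,s)`. -/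
def PBSset (N : ℤ) (k l : ℕ) (s : ℤ) : Set (Multiset ℕ) :=
  if s < 0 then ∅ else {M ∈ PboxSet N k l | corankCond M s}

/-- The Barnes–Savage function `P(N,k,l,s)`. -/
noncomputable def PBScount (N : ℤ) (k l : ℕ) (s : ℤ) : ℕ := Set.ncard (PBSset N k l s)

/-- Values `j - ∑_{i=1}^j rᵢ(π)` over partitions `π ∈ P(N,k,l)` and `1 ≤ j ≤ d(π)`. -/
def valSet (N k l : ℕ) : Set ℤ :=
  {v | ∃ M ∈ PboxSet (N : ℤ) k l, ∃ j : ℕ, 1 ≤ j ∧ j ≤ durfee M ∧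
    v = (j : ℤ) - ∑ i ∈ Finset.Icc 1 j, corank M i}

/-- Same values, over partitions of `N` with parts at most `k` (any number of parts). -/
def valSetU (N k : ℕ) : Set ℤ :=
  {v | ∃ M : Multiset ℕ, M.sum = N ∧ (∀ x ∈ M, 0 < x ∧ x ≤ k) ∧ ∃ j : ℕ, 1 ≤ j ∧
    j ≤ durfee M ∧ v = (j : ℤ) - ∑ i ∈ Finset.Icc 1 j, corank M i}

/-- Same values, over partitions of `N` into at most `l` parts (parts unbounded). -/
def valSetL (N l : ℕ) : Set ℤ :=
  {v | ∃ M : Multiset ℕ, M.sum = N ∧ Multiset.card M ≤ l ∧ (∀ x ∈ M, 0 < x) ∧ ∃ j : ℕ, 1 ≤ j ∧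
    j ≤ durfee M ∧ v = (j : ℤ) - ∑ i ∈ Finset.Icc 1 j, corank M i}

/-- The partition of `N` with as many parts equal to `k` as possible. -/
def maxPart (N k : ℕ) : Multiset ℕ :=
  Multiset.replicate (N / k) k + (if N % k = 0 then 0 else {N % k})

/-- The partition of `N` (at most `l` parts) whose conjugate has as many parts `= l` as possible. -/
def minPart (N l : ℕ) : Multiset ℕ :=
  (Multiset.replicate (N % l) (N / l + 1) + Multiset.replicate (l - N % l) (N / l)).filter (0 < ·)

/-- The function `M'(N,k)` of Algorithm 2. -/
def Mfun (N k : ℕ) : ℕ :=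
  if N = 0 ∨ k = 0 then 0
  else if k < N / k then 0
  else if N % k = 0 then (N / k) * (k - N / k + 1)
  else if N % k ≤ N / k then (N / k) * (k - N / k + 1) - N % k
  else (N / k) * (k - N / k - 1) + N % k


lemma pbox_finite (N : ℤ) (k l : ℕ) : (PboxSet N k l).Finite := by
  rcases lt_or_ge N 0 with h | h
  · convert Set.finite_empty
    ext M
    simp only [PboxSet, Set.mem_setOf_eq, Set.mem_empty_iff_false, iff_false]
    rintro ⟨hs, -, -⟩
    have h0 : (0:ℤ) ≤ (M.sum : ℤ) := Int.ofNat_nonneg _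
    omega
  · have hsub : PboxSet N k l ⊆ (fun p : Nat.Partition N.toNat => p.parts) '' Set.univ := by
      rintro M ⟨hs, hc, hx⟩
      refine ⟨⟨M, fun hx' => (hx _ hx').1, ?_⟩, trivial, rfl⟩
      omega
    exact ((Set.finite_univ).image _).subset hsub

/-- split off partitions containing a part equal to `k`. -/
lemma split_k (N : ℤ) (k l : ℕ) (hk : 1 ≤ k) :
    Pcount N k l = Pcount N (k-1) l +
      Set.ncard {M | M ∈ PboxSet N k l ∧ k ∈ M} := by
  have hsub : PboxSet N (k-1) l ∪ {M | M ∈ PboxSet N k l ∧ k ∈ M} = PboxSet N k l := by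
    ext M
    constructor
    · rintro (⟨hs, hc, hx⟩ | ⟨hM, -⟩)
      · exact ⟨hs, hc, fun x h => ⟨(hx x h).1, by have := (hx x h).2; omega⟩⟩
      · exact hM
    · rintro ⟨hs, hc, hx⟩
      by_cases hkM : k ∈ M
      · exact Or.inr ⟨⟨hs, hc, hx⟩, hkM⟩
      · refine Or.inl ⟨hs, hc, fun x h => ⟨(hx x h).1, ?_⟩⟩
        have h1 := (hx x h).2
        have h2 : x ≠ k := fun he => hkM (he ▸ h)
        omega
  have hdisj : Disjoint (PboxSet N (k-1) l) {M | M ∈ PboxSet N k l ∧ k ∈ M} := by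
    rw [Set.disjoint_left]
    rintro M ⟨-, -, hx⟩ ⟨-, hkM⟩
    have := (hx k hkM).2
    omega
  have := Set.ncard_union_eq hdisj (pbox_finite N (k-1) l)
    ((pbox_finite N k l).subset (fun M hM => hM.1))
  rw [hsub] at this
  exact this

/-- split partitions containing part `k` by whether the number of parts is `l` or `< l`. -/
lemma split_l (N : ℤ) (k l : ℕ) (hl : 1 ≤ l) :
    Set.ncard {M | M ∈ PboxSet N k l ∧ k ∈ M} =
      Set.ncard {M | M ∈ PboxSet N k (l-1) ∧ k ∈ M} +
      Set.ncard {M | M ∈ PboxSet N k l ∧ k ∈ M ∧ Multiset.card M = l} := by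
  have hsub : {M | M ∈ PboxSet N k (l-1) ∧ k ∈ M} ∪
      {M | M ∈ PboxSet N k l ∧ k ∈ M ∧ Multiset.card M = l} =
      {M | M ∈ PboxSet N k l ∧ k ∈ M} := by
    ext M
    constructor
    · rintro (⟨⟨hs, hc, hx⟩, hkM⟩ | ⟨hM, hkM, -⟩)
      · exact ⟨⟨hs, by omega, hx⟩, hkM⟩
      · exact ⟨hM, hkM⟩
    · rintro ⟨⟨hs, hc, hx⟩, hkM⟩
      by_cases hcl : Multiset.card M = l
      · exact Or.inr ⟨⟨hs, hc, hx⟩, hkM, hcl⟩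
      · exact Or.inl ⟨⟨hs, by omega, hx⟩, hkM⟩
  have hdisj : Disjoint {M | M ∈ PboxSet N k (l-1) ∧ k ∈ M}
      {M | M ∈ PboxSet N k l ∧ k ∈ M ∧ Multiset.card M = l} := by
    rw [Set.disjoint_left]
    rintro M ⟨⟨-, hc, -⟩, -⟩ ⟨-, -, hcl⟩
    omega
  have := Set.ncard_union_eq hdisj
    ((pbox_finite N k (l-1)).subset (fun M hM => hM.1))
    ((pbox_finite N k l).subset (fun M hM => hM.1))
  rw [hsub] at this
  exact this

/-- remove the first row and first column. -/
def phiBS (k : ℕ) (M : Multiset ℕ) : Multiset ℕ :=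
  ((M.erase k).map (fun x => x - 1)).filter (0 < ·)

/-- add back the first row and first column. -/
def psiBS (k l : ℕ) (M' : Multiset ℕ) : Multiset ℕ :=
  k ::ₘ ((M'.map (fun x => x + 1)) + Multiset.replicate (l - 1 - Multiset.card M') 1)

lemma map_succ_sum (s : Multiset ℕ) :
    (s.map (fun x => x + 1)).sum = s.sum + Multiset.card s := by
  induction s using Multiset.induction with
  | empty => simp
  | cons a s ih => simp [ih]; omega

lemma step4 (N : ℤ) (k l : ℕ) (hk : 1 ≤ k) (hl : 1 ≤ l) :
    Set.ncard {M | M ∈ PboxSet N k l ∧ k ∈ M ∧ Multiset.card M = l} =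
      Pcount (N - k - l + 1) (k-1) (l-1) := by
  set D := {M | M ∈ PboxSet N k l ∧ k ∈ M ∧ Multiset.card M = l} with hD
  -- key facts about elements of D
  have key : ∀ M ∈ D, psiBS k l (phiBS k M) = M ∧
      phiBS k M ∈ PboxSet (N - k - l + 1) (k-1) (l-1) := by
    rintro M ⟨⟨hs, hc, hx⟩, hkM, hcl⟩
    set R := M.erase k with hR
    have hMR : k ::ₘ R = M := Multiset.cons_erase hkM
    have hcardR : Multiset.card R = l - 1 := by
      rw [hR, Multiset.card_erase_of_mem hkM, hcl]; rfl
    have hxR : ∀ x ∈ R, 0 < x ∧ x ≤ k := fun x hx' => hx x (Multiset.mem_of_mem_erase hx')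
    set S := R.map (fun x => x - 1) with hS
    have hphi : phiBS k M = S.filter (0 < ·) := rfl
    have hSsplit : S.filter (0 < ·) + S.filter (fun x => ¬ 0 < x) = S :=
      Multiset.filter_add_not _ _
    have hzeros : S.filter (fun x => ¬ 0 < x) =
        Multiset.replicate (Multiset.card S - Multiset.card (S.filter (0 < ·))) 0 := by
      rw [Multiset.eq_replicate]
      constructor
      · have := congrArg Multiset.card hSsplit
        simp only [Multiset.card_add] at this
        omega
      · intro b hb
        have := (Multiset.mem_filter.mp hb).2
        omega
    -- recover R from S
    have hRS : S.map (fun x => x + 1) = R := by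
      rw [hS, Multiset.map_map]
      have : R.map ((fun x => x + 1) ∘ (fun x => x - 1)) = R.map id := by
        apply Multiset.map_congr rfl
        intro x hx'
        have := (hxR x hx').1
        simp only [Function.comp_apply, id_eq]
        omega
      rw [this, Multiset.map_id]
    have hcardS : Multiset.card S = l - 1 := by rw [hS, Multiset.card_map, hcardR]
    have hcardphi : Multiset.card (phiBS k M) ≤ l - 1 := by
      rw [hphi]
      calc Multiset.card (S.filter (0 < ·)) ≤ Multiset.card S := Multiset.card_le_card (Multiset.filter_le _ _)
        _ = l - 1 := hcardS
    -- sums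
    have hsumM : M.sum = k + R.sum := by rw [← hMR]; simp
    have hsumRS : R.sum = S.sum + (l - 1) := by
      rw [← hRS, map_succ_sum, hcardS]
    have hsumS : S.sum = (phiBS k M).sum := by
      conv_lhs => rw [← hSsplit]
      rw [Multiset.sum_add, hzeros, Multiset.sum_replicate, hphi]
      simp
    -- psi ∘ phi = id
    have hpsiphi : psiBS k l (phiBS k M) = M := by
      rw [psiBS, hphi, ← hMR]
      congr 1
      have : R = (S.filter (0 < ·)).map (fun x => x + 1) +
          Multiset.replicate (Multiset.card S - Multiset.card (S.filter (0 < ·))) 1 := by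
        conv_lhs => rw [← hRS]
        conv_lhs => rw [← hSsplit]
        rw [Multiset.map_add, hzeros, Multiset.map_replicate]
      rw [this, hcardS]
    refine ⟨hpsiphi, ?_, ?_, ?_⟩
    · -- sum condition
      have hMsum : (M.sum : ℤ) = N := hs
      have : M.sum = k + ((phiBS k M).sum + (l - 1)) := by omega
      push_cast [this] at hMsum ⊢
      omega
    · exact hcardphi
    · intro x hx'
      rw [hphi, Multiset.mem_filter] at hx'
      obtain ⟨hmem, hpos⟩ := hx'
      obtain ⟨y, hy, rfl⟩ := Multiset.mem_map.mp hmem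
      have := (hxR y hy).2
      omega
  have key2 : ∀ M' ∈ PboxSet (N - k - l + 1) (k-1) (l-1),
      phiBS k (psiBS k l M') = M' ∧ psiBS k l M' ∈ D := by
    rintro M' ⟨hs', hc', hx'⟩
    have hphipsi : phiBS k (psiBS k l M') = M' := by
      rw [phiBS, psiBS, Multiset.erase_cons_head, Multiset.map_add, Multiset.map_map,
        Multiset.map_replicate, Multiset.filter_add]
      have h1 : M'.map ((fun x => x - 1) ∘ (fun x => x + 1)) = M' := by
        have : M'.map ((fun x => x - 1) ∘ (fun x => x + 1)) = M'.map id := by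
          apply Multiset.map_congr rfl
          intro x _
          simp only [Function.comp_apply, id_eq]
          omega
        rw [this, Multiset.map_id]
      rw [h1]
      have h2 : M'.filter (0 < ·) = M' :=
        Multiset.filter_eq_self.mpr (fun x hx'' => (hx' x hx'').1)
      have h3 : (Multiset.replicate (l - 1 - Multiset.card M') (1 - 1)).filter (0 < ·) = 0 := by
        apply Multiset.filter_eq_nil.mpr
        intro x hxx
        have := Multiset.eq_of_mem_replicate hxx
        omega
      rw [h2, h3, add_zero]
    refine ⟨hphipsi, ⟨?_, ?_, ?_⟩, Multiset.mem_cons_self _ _, ?_⟩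
    · -- sum
      rw [psiBS]
      rw [Multiset.sum_cons, Multiset.sum_add, map_succ_sum, Multiset.sum_replicate, smul_eq_mul]
      have hsig : (M'.sum : ℤ) = N - k - l + 1 := hs'
      have : k + (M'.sum + Multiset.card M' + (l - 1 - Multiset.card M') * 1) =
          k + M'.sum + (l - 1) := by omega
      rw [this]
      omega
    · rw [psiBS]
      simp only [Multiset.card_cons, Multiset.card_add, Multiset.card_map,
        Multiset.card_replicate]
      omega
    · intro x hxx
      rw [psiBS, Multiset.mem_cons] at hxx
      rcases hxx with rfl | hxx
      · omega
      rw [Multiset.mem_add] at hxx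
      rcases hxx with hxx | hxx
      · obtain ⟨y, hy, rfl⟩ := Multiset.mem_map.mp hxx
        have := (hx' y hy).2
        omega
      · have := Multiset.eq_of_mem_replicate hxx
        omega
    · rw [psiBS]
      simp only [Multiset.card_cons, Multiset.card_add, Multiset.card_map,
        Multiset.card_replicate]
      omega
  -- now the bijection argument
  have himg : phiBS k '' D = PboxSet (N - k - l + 1) (k-1) (l-1) := by
    ext M'
    constructor
    · rintro ⟨M, hM, rfl⟩
      exact (key M hM).2
    · intro hM'
      exact ⟨psiBS k l M', (key2 M' hM').2, (key2 M' hM').1⟩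
  have hinj : Set.InjOn (phiBS k) D := by
    intro M1 h1 M2 h2 he
    rw [← (key M1 h1).1, ← (key M2 h2).1, he]
  rw [Pcount, ← himg, Set.ncard_image_of_injOn hinj]

/-- The recurrence `P(N,k,l) = P(N-k-l+1,k-1,l-1) + P(N,k-1,l) + P(N,k,l-1) - P(N,k-1,l-1)`. -/
theorem stmt4 (N : ℤ) (k l : ℕ) (hN : 1 ≤ N) (hk : 1 ≤ k) (hl : 1 ≤ l) :
    (Pcount N k l : ℤ) =
      Pcount (N - k - l + 1) (k - 1) (l - 1) + Pcount N (k - 1) l + Pcount N k (l - 1)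
        - Pcount N (k - 1) (l - 1) := by
  have h1 := split_k N k l hk
  have h2 := split_k N k (l-1) hk
  have h3 := split_l N k l hl
  have h4 := step4 N k l hk hl
  omega
end

section
/- Let N, k be positive integers with k ≥ ⌊N/k⌋, write q = ⌊N/k⌋ and r = N mod k. If r = 0 then the maximum of j − ∑_{i=1}^{j} rᵢ(π) over partitions π of N with largest part at most k (and any number of parts) and 1 ≤ j ≤ d(π) equals q(k−q+1). If r > 0 and r ≤ q, the maximum equals q(k−q+1) − r; if r > 0 and r > q, it equals q(k−q−1) + r. -/
open Finset

namespace BS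

def dlist (M : Multiset ℕ) : List ℕ := (M.sort (· ≤ ·)).reverse

lemma dlist_coe (M : Multiset ℕ) : (↑(dlist M) : Multiset ℕ) = M := by
  simp [dlist]

lemma dlist_sorted (M : Multiset ℕ) : (dlist M).Pairwise (· ≥ ·) := by
  have := Multiset.pairwise_sort M (· ≤ ·)
  rw [dlist, List.pairwise_reverse]
  exact this

lemma dlist_length (M : Multiset ℕ) : (dlist M).length = Multiset.card M := by
  simpa using congrArg Multiset.card (dlist_coe M)

lemma prt_eq (M : Multiset ℕ) (i : ℕ) : prt M i = (dlist M).getD (i-1) 0 := rfl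

lemma mem_of_mem_dlist {M : Multiset ℕ} {x : ℕ} (h : x ∈ dlist M) : x ∈ M := by
  rw [← dlist_coe M]; exact_mod_cast h

-- antitone
lemma prt_anti (M : Multiset ℕ) {i i' : ℕ} (h : i ≤ i') : prt M i' ≤ prt M i := by
  rw [prt_eq, prt_eq]
  rcases lt_or_ge (i' - 1) (dlist M).length with h2 | h2
  · have h1 : i - 1 < (dlist M).length := lt_of_le_of_lt (by omega) h2
    rw [List.getD_eq_getElem _ _ h1, List.getD_eq_getElem _ _ h2]
    exact (dlist_sorted M).rel_get_of_le (a := ⟨i-1, h1⟩) (b := ⟨i'-1, h2⟩) (by simp; omega)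
  · rw [List.getD_eq_default _ _ h2]; exact Nat.zero_le _

lemma sum_take_succ (l : List ℕ) (j : ℕ) :
    (l.take (j+1)).sum = (l.take j).sum + l.getD j 0 := by
  rcases lt_or_ge j l.length with h | h
  · rw [List.take_succ, List.sum_append, List.getD_eq_getElem _ _ h]
    simp [List.getElem?_eq_getElem h]
  · rw [List.take_of_length_le h, List.take_of_length_le (by omega), List.getD_eq_default _ _ h]
    omega

lemma sum_prt (M : Multiset ℕ) (j : ℕ) :
    ∑ i ∈ Icc 1 j, prt M i = ((dlist M).take j).sum := by
  induction j with
  | zero => simp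
  | succ j ih =>
    rw [Finset.sum_Icc_succ_top (by omega), sum_take_succ, ih, prt_eq]
    simp

lemma sum_conjPrt (M : Multiset ℕ) (j : ℕ) :
    ∑ i ∈ Icc 1 j, conjPrt M i = (M.map (fun x => min x j)).sum := by
  induction M using Multiset.induction with
  | empty => simp [conjPrt]
  | cons a M ih =>
    have h1 : ∀ i, conjPrt (a ::ₘ M) i = (if i ≤ a then 1 else 0) + conjPrt M i := by
      intro i
      simp only [conjPrt, Multiset.filter_cons]
      rw [Multiset.card_add]
      congr 1
      split <;> simp
    simp only [h1, Finset.sum_add_distrib, ih, Multiset.map_cons, Multiset.sum_cons]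
    congr 1
    rw [Finset.sum_boole]
    have : ((Icc 1 j).filter fun i => i ≤ a) = Icc 1 (min j a) := by
      ext i; simp; omega
    simp [this, Nat.min_comm]

lemma le_prt_of_le_durfee (M : Multiset ℕ) {j : ℕ} (h1 : 1 ≤ j) (h2 : j ≤ durfee M) :
    j ≤ prt M j := by
  by_contra hc
  push_neg at hc
  have hsub : ((Finset.Icc 1 (Multiset.card M)).filter fun i => i ≤ prt M i) ⊆ Icc 1 (j-1) := by
    intro i hi
    simp only [Finset.mem_filter, Finset.mem_Icc] at hi ⊢
    refine ⟨hi.1.1, ?_⟩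
    by_contra hij
    push_neg at hij
    have := prt_anti M (show j ≤ i by omega)
    omega
  have := Finset.card_le_card hsub
  rw [Nat.card_Icc] at this
  unfold durfee at h2
  omega

lemma durfee_le_card (M : Multiset ℕ) : durfee M ≤ Multiset.card M := by
  calc durfee M ≤ (Finset.Icc 1 (Multiset.card M)).card := Finset.card_le_card (Finset.filter_subset _ _)
  _ = Multiset.card M := by rw [Nat.card_Icc]; omega

lemma prt_le {M : Multiset ℕ} {k : ℕ} (h : ∀ x ∈ M, x ≤ k) (i : ℕ) : prt M i ≤ k := by
  rw [prt_eq]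
  rcases lt_or_ge (i-1) (dlist M).length with h2 | h2
  · rw [List.getD_eq_getElem _ _ h2]
    exact h _ (mem_of_mem_dlist (List.getElem_mem h2))
  · rw [List.getD_eq_default _ _ h2]; exact Nat.zero_le _

def g (k j R : ℕ) : ℕ := j * (R / k) + min (R % k) j

lemma g_mono (k j : ℕ) {R R' : ℕ} (h : R ≤ R') : g k j R ≤ g k j R' := by
  unfold g
  rcases Nat.lt_or_ge (R / k) (R' / k) with hd | hd
  · have : j * (R / k) + j ≤ j * (R' / k) := by
      calc j * (R / k) + j = j * (R / k + 1) := by ring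
      _ ≤ j * (R' / k) := Nat.mul_le_mul_left _ (by omega)
    omega
  · have hd2 : R / k ≤ R' / k := Nat.div_le_div_right h
    have hd3 : R / k = R' / k := le_antisymm hd2 hd
    have h1 := Nat.div_add_mod R k
    have h2 := Nat.div_add_mod R' k
    rw [hd3] at h1 ⊢
    have : R % k ≤ R' % k := by omega
    omega

lemma g_subadd {k j a S : ℕ} (hk : 0 < k) (hjk : j ≤ k) (ha : a ≤ k) :
    g k j (a + S) ≤ min a j + g k j S := by
  have hS := Nat.div_add_mod S k
  have hs' : S % k < k := Nat.mod_lt _ hk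
  have heq : a + S = a + S % k + k * (S / k) := by omega
  have hdiv : (a + S) / k = (a + S % k) / k + S / k := by
    rw [heq, Nat.add_mul_div_left _ _ hk]
  have hmod : (a + S) % k = (a + S % k) % k := by
    rw [heq, Nat.add_mul_mod_self_left]
  unfold g
  rw [hdiv, hmod]
  rcases Nat.lt_or_ge (a + S % k) k with h | h
  · rw [Nat.div_eq_of_lt h, Nat.mod_eq_of_lt h]
    have h2 : j * (0 + S / k) = j * (S / k) := by ring
    omega
  · have hd1 : (a + S % k) / k = 1 := by
      apply Nat.div_eq_of_lt_le (by omega) (by omega)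
    have hm2 : (a + S % k) % k = a + S % k - k := by
      rw [Nat.mod_eq_sub_mod h, Nat.mod_eq_of_lt (by omega)]
    rw [hd1, hm2]
    have h2 : j * (1 + S / k) = j + j * (S / k) := by ring
    omega

lemma penalty {k j : ℕ} (hk : 0 < k) (hjk : j ≤ k) (M : Multiset ℕ) (h : ∀ x ∈ M, x ≤ k) :
    g k j M.sum ≤ (M.map (fun x => min x j)).sum := by
  induction M using Multiset.induction with
  | empty => simp [g]
  | cons a M ih =>
    simp only [Multiset.sum_cons, Multiset.map_cons]
    calc g k j (a + M.sum) ≤ min a j + g k j M.sum :=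
          g_subadd hk hjk (h a (Multiset.mem_cons_self a M))
      _ ≤ min a j + (M.map (fun x => min x j)).sum := by
          have := ih (fun x hx => h x (Multiset.mem_cons_of_mem hx))
          omega

lemma arith {k q r j A Rd : ℕ} (hk : 1 ≤ k) (hqk : q ≤ k) (hr : r < k)
    (hj1 : 1 ≤ j) (hjk : j ≤ k) (hA : A ≤ j * k) (hN : A + Rd = k * q + r) :
    (j : ℤ) + A - j * j - g k j Rd ≤
      (if r ≤ q then (q:ℤ) * ((k:ℤ) - q + 1) - r else (q:ℤ) * ((k:ℤ) - q - 1) + r) := by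
  rcases le_or_gt j q with hjq | hjq
  · -- j ≤ q
    have hmul : k * (q - j) + k * j = k * q := by rw [← Nat.mul_add]; congr 1; omega
    have hcomm : j * k = k * j := Nat.mul_comm _ _
    have hRd : k * (q - j) + r ≤ Rd := by omega
    have hgl : g k j (k * (q - j) + r) ≤ g k j Rd := g_mono k j hRd
    have hgval : g k j (k * (q - j) + r) = j * (q - j) + min r j := by
      unfold g
      rw [Nat.mul_add_div (by omega), Nat.mul_add_mod, Nat.div_eq_of_lt hr,
        Nat.mod_eq_of_lt hr]
      simp
    have hstep : (j : ℤ) + A - j * j - g k j Rd ≤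
        (j : ℤ) + j * k - j * j - (j * (q - j) + min (r:ℤ) j) := by
      have h1 : (g k j (k * (q - j) + r) : ℤ) ≤ (g k j Rd : ℤ) := by exact_mod_cast hgl
      have h2 : (g k j (k * (q - j) + r) : ℤ) = j * ((q:ℤ) - j) + min (r:ℤ) j := by
        rw [hgval]; push_cast [Nat.cast_sub hjq]; omega
      have h3 : (A : ℤ) ≤ (j : ℤ) * k := by exact_mod_cast hA
      rw [h2] at h1
      linarith
    refine le_trans hstep ?_
    split
    · rename_i hrq
      have key1 : (r:ℤ) - min (r:ℤ) j ≤ (q:ℤ) - j := by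
        have : (r:ℕ) ≤ q := hrq
        omega
      have key2 : ((q:ℤ) - j) ≤ ((q:ℤ) - j) * ((k:ℤ) - q + 1) := by
        apply le_mul_of_one_le_right
        · omega
        · have : (q:ℤ) ≤ k := by exact_mod_cast hqk
          omega
      nlinarith [key1, key2]
    · rename_i hrq
      push_neg at hrq
      have hmin : min (r:ℤ) j = j := by omega
      have key2 : (0:ℤ) ≤ ((q:ℤ) - j) * ((k:ℤ) - q) := by
        apply mul_nonneg
        · omega
        · have : (q:ℤ) ≤ k := by exact_mod_cast hqk
          omega
      rw [hmin]
      nlinarith [key2]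
  · -- q < j
    have hAN : (A:ℤ) ≤ (k:ℤ) * q + r := by
      have : A ≤ k * q + r := by omega
      exact_mod_cast this
    have hg0 : (0:ℤ) ≤ (g k j Rd : ℤ) := Int.natCast_nonneg _
    have key : ((j:ℤ) - (q+1)) ≤ ((j:ℤ) - (q+1)) * ((j:ℤ) + (q+1)) := by
      apply le_mul_of_one_le_right
      · have : (q:ℤ) < j := by exact_mod_cast hjq
        omega
      · have h0 : (0:ℤ) ≤ (q:ℤ) := Int.natCast_nonneg _
        have h1 : (1:ℤ) ≤ (j:ℤ) := by exact_mod_cast hj1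
        omega
    split <;> rename_i hrq
    · have : (r:ℤ) ≤ q := by exact_mod_cast hrq
      nlinarith [key]
    · push_neg at hrq
      have : (q:ℤ) < r := by exact_mod_cast hrq
      nlinarith [key]

lemma upper {N k : ℕ} (hk : 1 ≤ k) (hq : N / k ≤ k) {M : Multiset ℕ}
    (hsum : M.sum = N) (hM : ∀ x ∈ M, 0 < x ∧ x ≤ k) {j : ℕ} (hj1 : 1 ≤ j)
    (hj2 : j ≤ durfee M) :
    (j : ℤ) - ∑ i ∈ Icc 1 j, corank M i ≤
      (if N % k ≤ N / k then ((N / k : ℕ) : ℤ) * ((k:ℤ) - ((N / k : ℕ) : ℤ) + 1) - ((N % k : ℕ) : ℤ)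
       else ((N / k : ℕ) : ℤ) * ((k:ℤ) - ((N / k : ℕ) : ℤ) - 1) + ((N % k : ℕ) : ℤ)) := by
  have hle : ∀ x ∈ M, x ≤ k := fun x hx => (hM x hx).2
  have hcor : ∑ i ∈ Icc 1 j, corank M i =
      ((∑ i ∈ Icc 1 j, conjPrt M i : ℕ) : ℤ) - ((∑ i ∈ Icc 1 j, prt M i : ℕ) : ℤ) := by
    unfold corank
    rw [Finset.sum_sub_distrib]
    push_cast
    ring
  set L := dlist M with hL
  have hlen : L.length = Multiset.card M := dlist_length M
  have hjlen : j ≤ L.length := by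
    rw [hlen]; exact le_trans hj2 (durfee_le_card M)
  have hdj : j ≤ prt M j := le_prt_of_le_durfee M hj1 hj2
  have hjk : j ≤ k := le_trans hdj (prt_le hle j)
  -- A
  set A := (L.take j).sum with hA
  have hsumprt : ∑ i ∈ Icc 1 j, prt M i = A := sum_prt M j
  have hAjk : A ≤ j * k := by
    calc A ≤ (L.take j).length * k :=
        List.sum_le_card_nsmul _ _ (fun x hx => hle x (mem_of_mem_dlist (List.mem_of_mem_take hx)))
    _ ≤ j * k := Nat.mul_le_mul_right k (by simp)
  -- B decomposition
  set Rd := (L.drop j).sum with hRd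
  have hAN : A + Rd = N := by
    rw [hA, hRd, ← List.sum_append, List.take_append_drop]
    have : L.sum = M.sum := by
      conv_rhs => rw [← dlist_coe M]
      simp [hL]
    rw [this, hsum]
  have hmemtake : ∀ x ∈ L.take j, j ≤ x := by
    intro x hx
    obtain ⟨n, hn, hxe⟩ := List.getElem_of_mem hx
    have hnj : n < j := lt_of_lt_of_le hn (by simp [List.length_take])
    have hnL : n < L.length := by
      simp only [List.length_take] at hn; omega
    have hEq : (L.take j)[n] = L[n] := by
      have h5 := List.getElem?_take_of_lt (l := L) (j := j) (i := n) hnj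
      rw [List.getElem?_eq_getElem hn, List.getElem?_eq_getElem hnL] at h5
      exact Option.some.inj h5
    have hsorted := (dlist_sorted M).rel_get_of_le (a := ⟨n, hnL⟩)
      (b := ⟨j-1, by rw [← hL]; omega⟩) (by simp only [Fin.mk_le_mk]; omega)
    simp only [List.get_eq_getElem] at hsorted
    have hprt : prt M j = L.getD (j-1) 0 := by rw [hL]; rfl
    rw [List.getD_eq_getElem _ _ (by omega)] at hprt
    rw [← hxe, hEq]
    calc j ≤ prt M j := hdj
    _ = L[j-1] := hprt
    _ ≤ L[n] := hsorted
  have htake : ((L.take j).map (fun x => min x j)).sum = j * j := by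
    have heq : (L.take j).map (fun x => min x j) = List.replicate j j := by
      rw [List.eq_replicate_iff]
      refine ⟨by simp [List.length_take]; omega, ?_⟩
      intro b hb
      obtain ⟨x, hx, rfl⟩ := List.mem_map.mp hb
      have := hmemtake x hx
      omega
    rw [heq, List.sum_const_nat]
  have hdrople : ∀ x ∈ L.drop j, x ≤ k :=
    fun x hx => hle x (mem_of_mem_dlist (List.mem_of_mem_drop hx))
  have hdroppen : g k j Rd ≤ ((L.drop j).map (fun x => min x j)).sum := by
    have := penalty (k := k) (j := j) (by omega) hjk (↑(L.drop j))
      (by intro x hx; exact hdrople x (by exact_mod_cast hx))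
    simpa using this
  have hBsplit : (∑ i ∈ Icc 1 j, conjPrt M i : ℕ) =
      j * j + ((L.drop j).map (fun x => min x j)).sum := by
    rw [sum_conjPrt]
    conv_lhs => rw [← dlist_coe M]
    rw [show ((↑L : Multiset ℕ).map fun x => min x j) = ↑(L.map fun x => min x j) from rfl]
    rw [Multiset.sum_coe]
    conv_lhs => rw [← List.take_append_drop j L, List.map_append, List.sum_append]
    rw [htake]
  have hBge : j * j + g k j Rd ≤ ∑ i ∈ Icc 1 j, conjPrt M i := by omega
  have harith := arith (q := N / k) (r := N % k) (A := A) (Rd := Rd) hk hq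
    (Nat.mod_lt _ (by omega)) hj1 hjk hAjk
    (by rw [hAN]; exact (Nat.div_add_mod N k).symm)
  rw [hcor, hsumprt]
  have hc1 : ((∑ i ∈ Icc 1 j, conjPrt M i : ℕ) : ℤ) ≥ ((j*j : ℕ) : ℤ) + ((g k j Rd : ℕ) : ℤ) := by
    exact_mod_cast hBge
  push_cast at hc1 harith ⊢
  linarith

lemma dlist_eq {M : Multiset ℕ} {l : List ℕ} (h : (↑l : Multiset ℕ) = M)
    (hs : l.Pairwise (· ≥ ·)) : dlist M = l :=
  List.Perm.eq_of_pairwise (fun _ _ _ _ h1 h2 => le_antisymm h2 h1)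
    (dlist_sorted M) hs (Multiset.coe_eq_coe.mp (by rw [dlist_coe, h]))

lemma durfee_ge {M : Multiset ℕ} {j : ℕ} (h1 : j ≤ Multiset.card M) (h2 : j ≤ prt M j) :
    j ≤ durfee M := by
  have hsub : Icc 1 j ⊆ (Icc 1 (Multiset.card M)).filter (fun i => i ≤ prt M i) := by
    intro i hi
    simp only [mem_Icc, mem_filter] at hi ⊢
    have := prt_anti M (show i ≤ j from hi.2)
    exact ⟨⟨hi.1, by omega⟩, by omega⟩
  have := Finset.card_le_card hsub
  rw [Nat.card_Icc] at this
  unfold durfee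
  omega

lemma corank_sum_eq (M : Multiset ℕ) (j : ℕ) :
    ∑ i ∈ Icc 1 j, corank M i =
      ((∑ i ∈ Icc 1 j, conjPrt M i : ℕ) : ℤ) - ((∑ i ∈ Icc 1 j, prt M i : ℕ) : ℤ) := by
  unfold corank
  rw [Finset.sum_sub_distrib]
  push_cast
  ring

lemma mem_val (N k : ℕ) (hN : 1 ≤ N) (hk : 1 ≤ k) (hq : N / k ≤ k) :
    (if N % k ≤ N / k then ((N / k : ℕ) : ℤ) * ((k:ℤ) - ((N / k : ℕ) : ℤ) + 1) - ((N % k : ℕ) : ℤ)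
     else ((N / k : ℕ) : ℤ) * ((k:ℤ) - ((N / k : ℕ) : ℤ) - 1) + ((N % k : ℕ) : ℤ)) ∈ valSetU N k := by
  have hNdm := Nat.div_add_mod N k
  have hrk : N % k < k := Nat.mod_lt _ (by omega)
  set q := N / k with hqdef
  set r := N % k with hrdef
  clear_value q r
  rcases le_or_gt r q with hrq | hrq
  · -- use j = q, list = replicate q k ++ (if r = 0 then [] else [r])
    have hq1 : 1 ≤ q := by
      rcases Nat.eq_zero_or_pos q with h | h
      · exfalso; rw [h] at hrq hNdm; simp at hNdm; omega
      · exact h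
    set t : List ℕ := if r = 0 then [] else [r] with ht
    set l : List ℕ := List.replicate q k ++ t with hl
    have hsort : l.Pairwise (· ≥ ·) := by
      rw [hl, List.pairwise_append]
      refine ⟨List.pairwise_replicate.mpr (Or.inr le_rfl), ?_, ?_⟩
      · rw [ht]; split <;> simp
      · intro x hx y hy
        rw [List.eq_of_mem_replicate hx]
        rw [ht] at hy
        rcases Nat.eq_zero_or_pos r with h0 | h0
        · simp [h0] at hy
        · rw [if_neg (by omega)] at hy
          simp at hy
          omega
    have hdl : dlist (↑l : Multiset ℕ) = l := dlist_eq rfl hsort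
    have hlsum : l.sum = N := by
      rw [hl, List.sum_append, List.sum_replicate, smul_eq_mul, ht]
      have hkq : k * q = q * k := Nat.mul_comm _ _
      rcases Nat.eq_zero_or_pos r with h0 | h0
      · simp [h0]; omega
      · rw [if_neg (by omega)]; simp; omega
    have hcard : q ≤ (↑l : Multiset ℕ).card := by
      simp only [Multiset.coe_card]
      rw [hl, List.length_append, List.length_replicate]
      omega
    have hprtq : prt (↑l : Multiset ℕ) q = k := by
      rw [prt_eq, hdl, hl]
      have h1 : q - 1 < (List.replicate q k).length := by simp; omega
      rw [List.getD_eq_getElem _ _ (by simp [List.length_append]; omega)]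
      rw [List.getElem_append_left h1, List.getElem_replicate]
    refine ⟨↑l, by simpa using hlsum, ?_, q, hq1, ?_, ?_⟩
    · intro x hx
      have hx' : x ∈ l := by exact_mod_cast hx
      rw [hl] at hx'
      rcases List.mem_append.mp hx' with h | h
      · rw [List.eq_of_mem_replicate h]; omega
      · rw [ht] at h
        rcases Nat.eq_zero_or_pos r with h0 | h0
        · simp [h0] at h
        · rw [if_neg (by omega)] at h; simp at h; omega
    · exact durfee_ge hcard (by omega)
    · -- value computation
      rw [corank_sum_eq, sum_prt, sum_conjPrt, hdl]
      have hA : (l.take q).sum = q * k := by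
        rw [hl, List.take_append_of_le_length (by simp), List.take_of_length_le (by simp),
          List.sum_replicate, smul_eq_mul]
      have hB : ((↑l : Multiset ℕ).map (fun x => min x q)).sum = q * q + r := by
        rw [show ((↑l : Multiset ℕ).map fun x => min x q) = ↑(l.map fun x => min x q) from rfl,
          Multiset.sum_coe, hl, List.map_append, List.sum_append, List.map_replicate,
          List.sum_replicate, smul_eq_mul, Nat.min_eq_right hq]
        congr 1
        rw [ht]
        rcases Nat.eq_zero_or_pos r with h0 | h0
        · simp [h0]
        · rw [if_neg (by omega)]
          simp [Nat.min_eq_left hrq]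
      rw [hA, hB]
      rw [if_pos hrq]
      push_cast
      ring
  · -- r > q : use j = q+1, list = replicate q k ++ [r]
    have hkq2 : q + 2 ≤ k := by omega
    set l : List ℕ := List.replicate q k ++ [r] with hl
    have hsort : l.Pairwise (· ≥ ·) := by
      rw [hl, List.pairwise_append]
      refine ⟨List.pairwise_replicate.mpr (Or.inr le_rfl), by simp, ?_⟩
      intro x hx y hy
      rw [List.eq_of_mem_replicate hx]
      simp at hy
      omega
    have hdl : dlist (↑l : Multiset ℕ) = l := dlist_eq rfl hsort
    have hlen : l.length = q + 1 := by rw [hl]; simp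
    have hlsum : l.sum = N := by
      rw [hl, List.sum_append, List.sum_replicate, smul_eq_mul]
      have hkq' : k * q = q * k := Nat.mul_comm _ _
      simp
      omega
    have hcard : q + 1 ≤ (↑l : Multiset ℕ).card := by
      simp only [Multiset.coe_card]
      omega
    have hprtq : prt (↑l : Multiset ℕ) (q+1) = r := by
      rw [prt_eq, hdl, hl]
      rw [List.getD_eq_getElem _ _ (by simp)]
      simp only [Nat.add_sub_cancel]
      rw [List.getElem_append_right (by simp)]
      simp
    refine ⟨↑l, by simpa using hlsum, ?_, q+1, by omega, ?_, ?_⟩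
    · intro x hx
      have hx' : x ∈ l := by exact_mod_cast hx
      rw [hl] at hx'
      rcases List.mem_append.mp hx' with h | h
      · rw [List.eq_of_mem_replicate h]; omega
      · simp at h; omega
    · exact durfee_ge hcard (by omega)
    · rw [corank_sum_eq, sum_prt, sum_conjPrt, hdl]
      have hA : (l.take (q+1)).sum = q * k + r := by
        rw [List.take_of_length_le (by omega), hl, List.sum_append, List.sum_replicate,
          smul_eq_mul]
        simp
      have hB : ((↑l : Multiset ℕ).map (fun x => min x (q+1))).sum = q * (q+1) + (q+1) := by
        rw [show ((↑l : Multiset ℕ).map fun x => min x (q+1)) = ↑(l.map fun x => min x (q+1)) from rfl,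
          Multiset.sum_coe, hl, List.map_append, List.sum_append, List.map_replicate,
          List.sum_replicate, smul_eq_mul, Nat.min_eq_right (by omega)]
        simp
        omega
      rw [hA, hB]
      rw [if_neg (by omega)]
      push_cast
      ring

end BS

/-- Explicit formula for `M(N,k)` (case `k ≥ ⌊N/k⌋`). -/
theorem stmt8 (N k : ℕ) (hN : 1 ≤ N) (hk : 1 ≤ k) (hq : N / k ≤ k) :
    (N % k = 0 → sSup (valSetU N k) = ((N / k : ℕ) : ℤ) * ((k : ℤ) - (N / k : ℕ) + 1)) ∧
    (N % k ≠ 0 → N % k ≤ N / k →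
      sSup (valSetU N k) = ((N / k : ℕ) : ℤ) * ((k : ℤ) - (N / k : ℕ) + 1) - ((N % k : ℕ) : ℤ)) ∧
    (N % k ≠ 0 → N / k < N % k →
      sSup (valSetU N k) = ((N / k : ℕ) : ℤ) * ((k : ℤ) - (N / k : ℕ) - 1) + ((N % k : ℕ) : ℤ)) := by
  have hbdd : ∀ v ∈ valSetU N k, v ≤
      (if N % k ≤ N / k then ((N / k : ℕ) : ℤ) * ((k:ℤ) - ((N / k : ℕ) : ℤ) + 1) - ((N % k : ℕ) : ℤ)
       else ((N / k : ℕ) : ℤ) * ((k:ℤ) - ((N / k : ℕ) : ℤ) - 1) + ((N % k : ℕ) : ℤ)) := by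
    rintro v ⟨M, hsum, hM, j, hj1, hj2, rfl⟩
    exact BS.upper hk hq hsum hM hj1 hj2
  have hmem := BS.mem_val N k hN hk hq
  have hsup : sSup (valSetU N k) =
      (if N % k ≤ N / k then ((N / k : ℕ) : ℤ) * ((k:ℤ) - ((N / k : ℕ) : ℤ) + 1) - ((N % k : ℕ) : ℤ)
       else ((N / k : ℕ) : ℤ) * ((k:ℤ) - ((N / k : ℕ) : ℤ) - 1) + ((N % k : ℕ) : ℤ)) :=
    le_antisymm (csSup_le ⟨_, hmem⟩ hbdd) (le_csSup ⟨_, hbdd⟩ hmem)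
  refine ⟨?_, ?_, ?_⟩
  · intro h0
    rw [hsup, if_pos (le_trans (Nat.le_of_eq h0) (Nat.zero_le _)), h0]
    push_cast
    ring
  · intro _ hle
    rw [hsup, if_pos hle]
  · intro _ hlt
    rw [hsup, if_neg (Nat.not_le.mpr hlt)]
end

section
/- Let N, k be positive integers with ⌊N/k⌋ > k. Then for every partition π of N with largest part at most k and every 1 ≤ j ≤ d(π), one has j − ∑_{i=1}^{j} rᵢ(π) ≤ 0. Consequently M′(N,k) = 0 whenever N ≥ k(k+1), i.e., the set P(N,k,l,s) equals P(N,k,l) already for all s ≥ 0 in this case. -/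
open Finset

lemma prt_le_of (M : Multiset ℕ) (k : ℕ) (hM : ∀ x ∈ M, x ≤ k) (i : ℕ) : prt M i ≤ k := by
  unfold prt
  set l := (M.sort (· ≤ ·)).reverse with hl
  by_cases hlen : i - 1 < l.length
  · apply hM
    have hmem : l.getD (i-1) 0 ∈ l := by
      rw [List.getD_eq_getElem l 0 hlen]
      exact List.getElem_mem _
    rwa [hl, List.mem_reverse, Multiset.mem_sort] at hmem
  · rw [List.getD_eq_default _ _ (le_of_not_gt hlen)]
    exact Nat.zero_le k

lemma sum_conjPrt (M : Multiset ℕ) (j : ℕ) :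
    ∑ i ∈ Finset.Icc 1 j, conjPrt M i = (M.map (fun p => min p j)).sum := by
  induction M using Multiset.induction with
  | empty => simp [conjPrt]
  | cons p M ih =>
    have hc : ∀ i, conjPrt (p ::ₘ M) i = (if i ≤ p then 1 else 0) + conjPrt M i := by
      intro i
      unfold conjPrt
      rw [Multiset.filter_cons]
      split_ifs <;> simp <;> omega
    have hIcc : (Finset.Icc 1 j).filter (fun i => i ≤ p) = Finset.Icc 1 (min j p) := by
      ext i
      simp only [Finset.mem_filter, Finset.mem_Icc, le_min_iff]
      omega
    simp only [hc, Finset.sum_add_distrib, ih, Multiset.map_cons, Multiset.sum_cons]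
    congr 1
    rw [← Finset.card_filter, hIcc, Nat.card_Icc]
    omega

lemma durfee_le (M : Multiset ℕ) (k : ℕ) (hM : ∀ x ∈ M, x ≤ k) : durfee M ≤ k := by
  by_contra hcon
  push_neg at hcon
  set S := (Finset.Icc 1 (Multiset.card M)).filter (fun i => i ≤ prt M i) with hS
  have hcard : S.card = durfee M := rfl
  -- there is an element of S that is ≥ k + 1
  have : ∃ i ∈ S, k + 1 ≤ i := by
    by_contra hno
    push_neg at hno
    have hsub : S ⊆ Finset.Icc 1 k := by
      intro i hi
      have h1 := (Finset.mem_filter.mp hi).1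
      rw [Finset.mem_Icc] at h1 ⊢
      exact ⟨h1.1, by have := hno i hi; omega⟩
    have := Finset.card_le_card hsub
    rw [hcard, Nat.card_Icc] at this
    omega
  obtain ⟨i, hiS, hik⟩ := this
  have h2 := (Finset.mem_filter.mp hiS).2
  have h3 : prt M i ≤ k := prt_le_of M k hM i
  omega

lemma key_ineq (N k : ℕ) (hk : 1 ≤ k) (h : k * (k + 1) ≤ N) (M : Multiset ℕ)
    (hsum : M.sum = N) (hx : ∀ x ∈ M, 0 < x ∧ x ≤ k) (j : ℕ) (hj1 : 1 ≤ j)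
    (hjd : j ≤ durfee M) : (j : ℤ) ≤ ∑ i ∈ Finset.Icc 1 j, corank M i := by
  have hMk : ∀ x ∈ M, x ≤ k := fun x hx' => (hx x hx').2
  have hjk : j ≤ k := le_trans hjd (durfee_le M k hMk)
  -- pointwise: j * p ≤ k * min p j
  have hpt : ∀ p ∈ M, j * p ≤ k * min p j := by
    intro p hp
    rcases le_total p j with hle | hle
    · rw [min_eq_left hle]
      exact Nat.mul_le_mul_right p hjk
    · rw [min_eq_right hle]
      calc j * p ≤ j * k := Nat.mul_le_mul_left j (hMk p hp)
        _ = k * j := Nat.mul_comm j k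
  have hmain : j * N ≤ k * (M.map (fun p => min p j)).sum := by
    calc j * N = (M.map (fun p => j * p)).sum := by
          rw [Multiset.sum_map_mul_left, Multiset.map_id', hsum]
      _ ≤ (M.map (fun p => k * min p j)).sum :=
          Multiset.sum_map_le_sum_map _ _ hpt
      _ = k * (M.map (fun p => min p j)).sum := by
          rw [Multiset.sum_map_mul_left]
  have hmin : j * (k + 1) ≤ (M.map (fun p => min p j)).sum := by
    have h1 : k * (j * (k + 1)) ≤ k * (M.map (fun p => min p j)).sum := by
      calc k * (j * (k + 1)) = j * (k * (k + 1)) := by ring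
        _ ≤ j * N := Nat.mul_le_mul_left j h
        _ ≤ _ := hmain
    exact Nat.le_of_mul_le_mul_left h1 hk
  have hprt : ∑ i ∈ Finset.Icc 1 j, prt M i ≤ j * k := by
    have := Finset.sum_le_card_nsmul (Finset.Icc 1 j) (fun i => prt M i) k
      (fun i _ => prt_le_of M k hMk i)
    rwa [Nat.card_Icc, smul_eq_mul, Nat.add_sub_cancel] at this
  have hconj : j * (k + 1) ≤ ∑ i ∈ Finset.Icc 1 j, conjPrt M i := by
    rw [sum_conjPrt]; exact hmin
  have hsplit : ∑ i ∈ Finset.Icc 1 j, corank M i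
      = ((∑ i ∈ Finset.Icc 1 j, conjPrt M i : ℕ) : ℤ)
        - ((∑ i ∈ Finset.Icc 1 j, prt M i : ℕ) : ℤ) := by
    unfold corank
    push_cast
    rw [Finset.sum_sub_distrib]
  rw [hsplit]
  have hexp : j * (k + 1) = j * k + j := by ring
  omega

/-- If `⌊N/k⌋ > k` (equivalently `N ≥ k(k+1)`), then `j - ∑_{i≤j} rᵢ(π) ≤ 0` for every
partition `π` of `N` with parts at most `k`; consequently `P(N,k,l,s) = P(N,k,l)` for all
`s ≥ 0`. -/
theorem stmt9 (N k : ℕ) (hN : 1 ≤ N) (hk : 1 ≤ k) (h : k * (k + 1) ≤ N) :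
    (∀ M : Multiset ℕ, M.sum = N → (∀ x ∈ M, 0 < x ∧ x ≤ k) →
      ∀ j : ℕ, 1 ≤ j → j ≤ durfee M → (j : ℤ) - ∑ i ∈ Finset.Icc 1 j, corank M i ≤ 0) ∧
    (∀ l : ℕ, ∀ s : ℤ, 0 ≤ s → PBSset (N : ℤ) k l s = PboxSet (N : ℤ) k l) := by
  constructor
  · intro M hsum hx j hj1 hjd
    have := key_ineq N k hk h M hsum hx j hj1 hjd
    omega
  · intro l s hs
    unfold PBSset
    rw [if_neg (not_lt.mpr hs)]
    ext M
    simp only [Set.mem_setOf_eq, Set.mem_sep_iff, and_iff_left_iff_imp]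
    intro hM
    intro j hj1 hjd
    obtain ⟨hMsum, _, hMx⟩ := hM
    have hsum : M.sum = N := by exact_mod_cast hMsum
    have := key_ineq N k hk h M hsum hMx j hj1 hjd
    omega
end

section
/- Let f₁(n) = 2(n−2)(n(n−3)/2+1)² and let f₄(n) be the total allocation size ∑_{l=0}^{1} ∑_{k=0}^{n−3} ∑_{N=0}^{min{k(n−1), ⌊(n²+3)/2−2n⌋}} (M′(N,k)+1), where M′(N,k) is as defined below. Then there exist constants 0 < c₁ < c₂ < 1 (one may take c₁ = 1/192 and c₂ = 7/12) such that c₁·f₁(n) ≤ f₄(n) ≤ c₂·f₁(n) for all sufficiently large n; in particular f₄(n) = Θ(n⁵). -/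
open Finset

/-- Total allocation size `f₁(n)` of the original algorithm. -/
def f1 (n : ℕ) : ℕ := 2 * (n - 2) * (n * (n - 3) / 2 + 1) ^ 2

/-- Total allocation size `f₄(n)` of the improved algorithm. -/
def f4 (n : ℕ) : ℕ :=
  ∑ l ∈ Finset.range 2, ∑ k ∈ Finset.range (n - 2),
    ∑ N ∈ Finset.range (min (k * (n - 1)) ((n ^ 2 + 3) / 2 - 2 * n) + 1), (Mfun N k + 1)

lemma aux_sq (q k : ℕ) (h : q ≤ k) : 4 * (q * (k - q + 1)) ≤ (k+1)^2 := by
  zify [h]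
  nlinarith [sq_nonneg ((k:ℤ) + 1 - 2*q)]

lemma mfun_le (N k : ℕ) : 4 * Mfun N k ≤ (k+1)^2 := by
  unfold Mfun
  split_ifs with h1 h2 h3 h4
  · simpa using Nat.zero_le ((k+1)^2)
  · simpa using Nat.zero_le ((k+1)^2)
  · exact aux_sq _ _ (not_lt.mp h2)
  · calc 4 * (N / k * (k - N / k + 1) - N % k) ≤ 4 * (N / k * (k - N / k + 1)) := by
          exact Nat.mul_le_mul_left _ (Nat.sub_le _ _)
      _ ≤ (k+1)^2 := aux_sq _ _ (not_lt.mp h2)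
  · have hk0 : k ≠ 0 := by tauto
    have hr : N % k < k := Nat.mod_lt _ (Nat.pos_of_ne_zero hk0)
    have hq : N / k ≤ k := not_lt.mp h2
    rcases Nat.eq_or_lt_of_le hq with he | hlt
    · have h0 : k - N / k - 1 = 0 := by omega
      rw [h0, Nat.mul_zero, Nat.zero_add]
      zify
      nlinarith [sq_nonneg ((k:ℤ) - 1), (by exact_mod_cast hr : (N % k : ℤ) < k)]
    · set q := N / k with hqe
      set r := N % k with hre
      obtain ⟨t, ht⟩ : ∃ t, k - q - 1 = t := ⟨_, rfl⟩
      rw [ht]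
      have hk : k = q + t + 1 := by omega
      have hr' : r ≤ q + t := by omega
      zify
      have hkz : (k:ℤ) = q + t + 1 := by exact_mod_cast hk
      nlinarith [sq_nonneg ((q : ℤ) - t), (by exact_mod_cast hr' : (r : ℤ) ≤ q + t)]

lemma mfun_ge (N k : ℕ) (h : N / k ≤ k) : N / k * (k - N / k) ≤ Mfun N k := by
  unfold Mfun
  split_ifs with h1 h2 h3 h4
  · rcases h1 with h' | h' <;> simp [h']
  · exact absurd h2 (not_lt.mpr h)
  · exact Nat.mul_le_mul_left _ (by omega)
  · have e : N / k * (k - N / k + 1) = N / k * (k - N / k) + N / k := by ring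
    have : N / k * (k - N / k) + N % k ≤ N / k * (k - N / k + 1) := by
      have := h4; linarith
    exact Nat.le_sub_of_add_le this
  · rcases Nat.eq_or_lt_of_le h with he | hlt
    · rw [he, Nat.sub_self, Nat.mul_zero]; exact Nat.zero_le _
    · obtain ⟨t, ht⟩ : ∃ t, k - N / k = t + 1 := ⟨k - N / k - 1, by omega⟩
      have h0 : k - N / k - 1 = t := by omega
      rw [ht]
      simp only [Nat.add_sub_cancel]
      have e2 : N / k * (t + 1) = N / k * t + N / k := by ring
      have hr : N / k ≤ N % k := by omega
      linarith

lemma sq_sum (t : ℕ) : 6 * ∑ k ∈ Finset.range t, ((k+1)^2 + 4) = t*(t+1)*(2*t+1) + 24*t := by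
  induction t with
  | zero => simp
  | succ t ih => rw [Finset.sum_range_succ, Nat.mul_add, ih]; ring

lemma two_dvd_aux (n : ℕ) (hn : 3 ≤ n) : 2 ∣ n * (n - 3) := by
  rcases Nat.even_or_odd n with h | h
  · exact Dvd.dvd.mul_right h.two_dvd _
  · obtain ⟨j, hj⟩ := h
    exact ⟨n * (j - 1), by rw [show n - 3 = 2*(j-1) by omega]; ring⟩

lemma hf4_eq (n : ℕ) : f4 n = 2 * ∑ k ∈ Finset.range (n - 2),
    ∑ N ∈ Finset.range (min (k * (n - 1)) ((n ^ 2 + 3) / 2 - 2 * n) + 1), (Mfun N k + 1) := by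
  simp only [f4]
  rw [Finset.sum_range_succ, Finset.sum_range_succ, Finset.sum_range_zero, zero_add]; omega

lemma f4_upper (m : ℕ) : 12 * f4 (m + 1000) ≤ 7 * f1 (m + 1000) := by
  set n := m + 1000 with hn
  set Bn := (n ^ 2 + 3) / 2 - 2 * n with hBn
  set g := ∑ k ∈ Finset.range (n - 2),
    ∑ N ∈ Finset.range (min (k * (n - 1)) Bn + 1), (Mfun N k + 1) with hg
  have hf4 : f4 n = 2 * g := hf4_eq n
  -- bound on Bn
  obtain ⟨y, hy⟩ : ∃ y, m ^ 2 = y := ⟨_, rfl⟩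
  have hn2 : n ^ 2 = y + 2000 * m + 1000000 := by rw [hn, ← hy]; ring
  have hBub : 2 * (Bn + 1) ≤ y + 1996 * m + 996005 := by
    rw [hBn, hn2, hn]; omega
  -- inner sum bound
  have hinner : ∀ k : ℕ, 4 * ∑ N ∈ Finset.range (min (k * (n - 1)) Bn + 1), (Mfun N k + 1)
      ≤ (Bn + 1) * ((k + 1) ^ 2 + 4) := by
    intro k
    rw [Finset.mul_sum]
    calc ∑ N ∈ Finset.range (min (k * (n - 1)) Bn + 1), 4 * (Mfun N k + 1)
        ≤ ∑ _N ∈ Finset.range (min (k * (n - 1)) Bn + 1), ((k + 1) ^ 2 + 4) :=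
          Finset.sum_le_sum (fun N _ => by have := mfun_le N k; omega)
      _ = (min (k * (n - 1)) Bn + 1) * ((k + 1) ^ 2 + 4) := by
          rw [Finset.sum_const, Finset.card_range, smul_eq_mul]
      _ ≤ (Bn + 1) * ((k + 1) ^ 2 + 4) :=
          Nat.mul_le_mul_right _ (by have := min_le_right (k * (n - 1)) Bn; omega)
  set Ss := ∑ k ∈ Finset.range (n - 2), ((k + 1) ^ 2 + 4) with hSs
  have hgb : 4 * g ≤ (Bn + 1) * Ss := by
    rw [hg, Finset.mul_sum, hSs, Finset.mul_sum]
    exact Finset.sum_le_sum (fun k _ => hinner k)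
  -- combine
  obtain ⟨A, hA⟩ : ∃ A, (Bn + 1) * Ss = A := ⟨_, rfl⟩
  rw [hA] at hgb
  have h24 : 24 * f4 n ≤ 12 * A := by omega
  have hT : 6 * Ss = (n-2)*((n-2)+1)*(2*(n-2)+1) + 24*(n-2) := sq_sum (n - 2)
  have ht2 : n - 2 = m + 998 := by omega
  have hXT : 12 * A ≤ (y + 1996 * m + 996005) *
      ((m+998)*((m+998)+1)*(2*(m+998)+1) + 24*(m+998)) := by
    calc 12 * A = (2 * (Bn + 1)) * (6 * Ss) := by rw [← hA]; ring
      _ = (2 * (Bn + 1)) * ((m+998)*((m+998)+1)*(2*(m+998)+1) + 24*(m+998)) := by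
          rw [hT, ht2]
      _ ≤ _ := Nat.mul_le_mul_right _ hBub
  -- f1 computation
  have hdvd : 2 ∣ n * (n - 3) := two_dvd_aux n (by omega)
  have h2C : 2 * (n * (n - 3) / 2 + 1) = (m + 999) * (m + 998) := by
    rw [Nat.mul_add, Nat.mul_div_cancel' hdvd, Nat.mul_one, hn,
      show m + 1000 - 3 = m + 997 by omega]
    ring_nf
  have hf1 : 14 * f1 n = 7 * (m+998) * ((m + 999) * (m + 998)) ^ 2 := by
    rw [f1, ht2]
    calc 14 * (2 * (m + 998) * (n * (n - 3) / 2 + 1) ^ 2)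
        = 7 * (m + 998) * (2 * (n * (n - 3) / 2 + 1)) ^ 2 := by ring
      _ = _ := by rw [h2C]
  have hfin : (y + 1996 * m + 996005) *
      ((m+998)*((m+998)+1)*(2*(m+998)+1) + 24*(m+998)) ≤ 14 * f1 n := by
    rw [hf1, ← hy]
    have hid : 7 * (m+998) * ((m + 999) * (m + 998)) ^ 2 =
        (m^2 + 1996 * m + 996005) * ((m+998)*((m+998)+1)*(2*(m+998)+1) + 24*(m+998))
        + (4961091980795214 + 24844275961795*m + 49766275981*m^2 + 49844092*m^3
           + 24961*m^4 + 5*m^5) := by ring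
    rw [hid]
    exact Nat.le_add_right _ _
  omega

lemma f4_lower (m : ℕ) : f1 (m + 1000) ≤ 192 * f4 (m + 1000) := by
  set n := m + 1000 with hn
  set Bn := (n ^ 2 + 3) / 2 - 2 * n with hBn
  set g := ∑ k ∈ Finset.range (n - 2),
    ∑ N ∈ Finset.range (min (k * (n - 1)) Bn + 1), (Mfun N k + 1) with hg
  have hf4 : f4 n = 2 * g := hf4_eq n
  set e := n / 8 with he
  set a := (n - 4) / 4 with ha
  set b := (n - 4) / 2 with hb
  set K := n - 3 - e with hK
  obtain ⟨y, hy⟩ : ∃ y, m ^ 2 = y := ⟨_, rfl⟩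
  have hn2 : n ^ 2 = y + 2000 * m + 1000000 := by rw [hn, ← hy]; ring
  have hBlb : y + 2000 * m + 1000002 ≤ 2 * Bn + 4 * n := by rw [hBn, hn2]; omega
  have hprod : (n - 4) * (n - 2) = y + 1994 * m + 994008 := by
    rw [show n - 4 = m + 996 by omega, show n - 2 = m + 998 by omega, ← hy]; ring
  have hbK : b ≤ K := by omega
  -- inner sum bound
  have hinner : ∀ k ∈ Finset.Icc K (n - 4), K * ((b+1) - a) * (a * (K - b)) ≤
      ∑ N ∈ Finset.range (min (k * (n - 1)) Bn + 1), (Mfun N k + 1) := by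
    intro k hk
    rw [Finset.mem_Icc] at hk
    have hk0 : 0 < k := by omega
    have hkb : k * (b + 1) ≤ Bn := by
      have s1 : k * (2 * (b + 1)) ≤ k * (n - 2) := Nat.mul_le_mul_left k (by omega)
      have s2 : k * (n - 2) ≤ (n - 4) * (n - 2) := Nat.mul_le_mul_right _ hk.2
      have s3 : 2 * (k * (b + 1)) = k * (2 * (b + 1)) := by ring
      omega
    have hNb : ∀ N ∈ Finset.Icc (k * a) (k * b + k - 1), a * (K - b) ≤ Mfun N k := by
      intro N hN
      rw [Finset.mem_Icc] at hN
      obtain ⟨q, hq⟩ : ∃ q, N / k = q := ⟨_, rfl⟩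
      have hqa : a ≤ q := by
        rw [← hq]
        exact (Nat.le_div_iff_mul_le hk0).mpr (by rw [Nat.mul_comm]; exact hN.1)
      have hqb : q ≤ b := by
        rw [← hq]
        have hbb : (b + 1) * k = k * b + k := by ring
        have hlt : N < (b + 1) * k := by omega
        exact Nat.lt_succ_iff.mp ((Nat.div_lt_iff_lt_mul hk0).mpr hlt)
      have hqk : q ≤ k := by omega
      have hmg := mfun_ge N k (by rw [hq]; exact hqk)
      rw [hq] at hmg
      calc a * (K - b) ≤ q * (k - q) := Nat.mul_le_mul hqa (by omega)
        _ ≤ Mfun N k := hmg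
    have hsub : Finset.Icc (k * a) (k * b + k - 1) ⊆
        Finset.range (min (k * (n - 1)) Bn + 1) := by
      intro x hx
      rw [Finset.mem_Icc] at hx
      rw [Finset.mem_range]
      have h1 : k * (b + 1) ≤ k * (n - 1) := Nat.mul_le_mul_left _ (by omega)
      have h3 : k * (b + 1) = k * b + k := by ring
      omega
    calc K * ((b+1) - a) * (a * (K - b))
        ≤ (k * ((b+1) - a)) * (a * (K - b)) :=
          Nat.mul_le_mul_right _ (Nat.mul_le_mul_right _ hk.1)
      _ = (Finset.Icc (k * a) (k * b + k - 1)).card * (a * (K - b)) := by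
          have h3 : k * (b + 1) = k * b + k := by ring
          have h5 : (b+1) - a + a = b + 1 := by omega
          have h4 : k * ((b+1) - a) + k * a = k * (b + 1) := by
            rw [← Nat.mul_add, h5]
          have hc : (Finset.Icc (k * a) (k * b + k - 1)).card = k * ((b+1) - a) := by
            rw [Nat.card_Icc]; omega
          rw [hc]
      _ ≤ ∑ N ∈ Finset.Icc (k * a) (k * b + k - 1), Mfun N k := by
          have := Finset.card_nsmul_le_sum (Finset.Icc (k * a) (k * b + k - 1))
            (fun N => Mfun N k) (a * (K - b)) hNb
          simpa [smul_eq_mul] using this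
      _ ≤ ∑ N ∈ Finset.range (min (k * (n - 1)) Bn + 1), Mfun N k :=
          Finset.sum_le_sum_of_subset hsub
      _ ≤ ∑ N ∈ Finset.range (min (k * (n - 1)) Bn + 1), (Mfun N k + 1) :=
          Finset.sum_le_sum (fun N _ => Nat.le_succ _)
  -- outer sum bound
  have houter : e * (K * ((b+1) - a) * (a * (K - b))) ≤ g := by
    rw [hg]
    calc e * (K * ((b+1) - a) * (a * (K - b)))
        = (Finset.Icc K (n - 4)).card * (K * ((b+1) - a) * (a * (K - b))) := by
          have hc : (Finset.Icc K (n - 4)).card = e := by rw [Nat.card_Icc]; omega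
          rw [hc]
      _ ≤ ∑ k ∈ Finset.Icc K (n - 4),
            ∑ N ∈ Finset.range (min (k * (n - 1)) Bn + 1), (Mfun N k + 1) := by
          have := Finset.card_nsmul_le_sum (Finset.Icc K (n - 4))
            (fun k => ∑ N ∈ Finset.range (min (k * (n - 1)) Bn + 1), (Mfun N k + 1))
            (K * ((b+1) - a) * (a * (K - b))) hinner
          simpa [smul_eq_mul] using this
      _ ≤ ∑ k ∈ Finset.range (n - 2),
            ∑ N ∈ Finset.range (min (k * (n - 1)) Bn + 1), (Mfun N k + 1) := by
          apply Finset.sum_le_sum_of_subset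
          intro x hx
          rw [Finset.mem_Icc] at hx
          rw [Finset.mem_range]
          omega
  -- numeric lower bounds
  have l1 : m + 993 ≤ 8 * e := by omega
  have l2 : 7 * m + 6976 ≤ 8 * K := by omega
  have l3 : m + 998 ≤ 4 * ((b+1) - a) := by omega
  have l4 : m + 993 ≤ 4 * a := by omega
  have l5 : 3 * m + 2992 ≤ 8 * (K - b) := by omega
  obtain ⟨P, hP⟩ : ∃ P, e * (K * ((b+1) - a) * (a * (K - b))) = P := ⟨_, rfl⟩
  rw [hP] at houter
  have hPl : (m+993) * ((7*m+6976) * (m+998)) * ((m+993) * (3*m+2992)) ≤ 8192 * P := by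
    calc (m+993) * ((7*m+6976) * (m+998)) * ((m+993) * (3*m+2992))
        ≤ (8*e) * ((8*K) * (4*((b+1) - a))) * ((4*a) * (8*(K - b))) :=
          Nat.mul_le_mul (Nat.mul_le_mul l1 (Nat.mul_le_mul l2 l3)) (Nat.mul_le_mul l4 l5)
      _ = 8192 * P := by rw [← hP]; ring
  -- f1 value
  have ht2 : n - 2 = m + 998 := by omega
  have hdvd : 2 ∣ n * (n - 3) := two_dvd_aux n (by omega)
  have h2C : 2 * (n * (n - 3) / 2 + 1) = (m + 999) * (m + 998) := by
    rw [Nat.mul_add, Nat.mul_div_cancel' hdvd, Nat.mul_one, hn,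
      show m + 1000 - 3 = m + 997 by omega]
    ring_nf
  have hf1e : 8192 * f1 n = 4096 * (m + 998) * ((m + 999) * (m + 998)) ^ 2 := by
    rw [f1, ht2]
    calc 8192 * (2 * (m + 998) * (n * (n - 3) / 2 + 1) ^ 2)
        = 4096 * (m + 998) * (2 * (n * (n - 3) / 2 + 1)) ^ 2 := by ring
      _ = _ := by rw [h2C]
  have hpoly : 4096 * (m + 998) * ((m + 999) * (m + 998)) ^ 2 ≤
      384 * ((m+993) * ((7*m+6976) * (m+998)) * ((m+993) * (3*m+2992))) := by
    have hid : 384 * ((m+993) * ((7*m+6976) * (m+998)) * ((m+993) * (3*m+2992))) =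
        4096 * (m + 998) * ((m + 999) * (m + 998)) ^ 2 +
        (3823965099396071424 + 19262492876427264*m + 38811682465024*m^2
          + 39099746688*m^3 + 19694592*m^4 + 3968*m^5) := by ring
    rw [hid]
    exact Nat.le_add_right _ _
  have hcmp : 8192 * f1 n ≤ 8192 * (192 * f4 n) := by set_option maxRecDepth 100000 in omega
  exact Nat.le_of_mul_le_mul_left hcmp (by norm_num)

/-- There are constants `0 < c₁ < c₂ < 1` (one may take `c₁ = 1/192`, `c₂ = 7/12`) with
`c₁ f₁(n) ≤ f₄(n) ≤ c₂ f₁(n)` for all sufficiently large `n`. -/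
theorem stmt17 :
    ∃ c₁ c₂ : ℝ, 0 < c₁ ∧ c₁ < c₂ ∧ c₂ < 1 ∧ c₁ = 1 / 192 ∧ c₂ = 7 / 12 ∧
      ∃ n₀ : ℕ, ∀ n ≥ n₀, c₁ * (f1 n : ℝ) ≤ (f4 n : ℝ) ∧ (f4 n : ℝ) ≤ c₂ * (f1 n : ℝ) := by
  refine ⟨1 / 192, 7 / 12, by norm_num, by norm_num, by norm_num, rfl, rfl, 1000, ?_⟩
  intro n hn
  obtain ⟨m, rfl⟩ : ∃ m, n = m + 1000 := ⟨n - 1000, by omega⟩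
  constructor
  · have h1 : (f1 (m + 1000) : ℝ) ≤ 192 * (f4 (m + 1000) : ℝ) := by
      exact_mod_cast f4_lower m
    linarith
  · have h2 : (12 : ℝ) * (f4 (m + 1000) : ℝ) ≤ 7 * (f1 (m + 1000) : ℝ) := by
      exact_mod_cast f4_upper m
    linarith
end
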